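/- Let Z ⊆ ℙ^n be a reduced zero-dimensional subscheme such that the restriction map H^0(ℙ^n, O(d)) → H^0(Z, O(d)) is not surjective. Then Z contains a subset Z' that is Cayley-Bacharach for O(d). -/

import Mathlib

/-- A finite reduced set `Z` of points of `ℙ^n` (given by vectors in `F^{n+1}`) is
Cayley-Bacharach for `O(d)`: every homogeneous form of degree `d` vanishing on all but
one point of `Z` vanishes on all of `Z`. -/
def IsCB (F : Type*) [Field F] (n d : ℕ) (Z : Finset (Fin (n + 1) → F)) : Prop :=
  ∀ f : MvPolynomial (Fin (n + 1)) F, f.IsHomogeneous d →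
    ∀ z ∈ Z, (∀ w ∈ Z, w ≠ z → MvPolynomial.eval w f = 0) → MvPolynomial.eval z f = 0

lemma aux_cb (F : Type*) [Field F] (n d : ℕ) :
    ∀ Z : Finset (Fin (n + 1) → F),
    ¬ Function.Surjective
      (fun f : MvPolynomial.homogeneousSubmodule (Fin (n + 1)) F d =>
        fun z : {x // x ∈ Z} =>
          MvPolynomial.eval (z : Fin (n + 1) → F) (f : MvPolynomial (Fin (n + 1)) F)) →
    ∃ Z' : Finset (Fin (n + 1) → F), Z' ⊆ Z ∧ Z'.Nonempty ∧ IsCB F n d Z' := by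
  intro Z
  classical
  induction Z using Finset.strongInduction with
  | _ Z ih =>
    intro hns
    rcases Z.eq_empty_or_nonempty with rfl | hne
    · exfalso
      apply hns
      intro t
      exact ⟨0, funext fun z => absurd z.2 (Finset.notMem_empty _)⟩
    by_cases hcb : IsCB F n d Z
    · exact ⟨Z, le_refl Z, hne, hcb⟩
    · simp only [IsCB, not_forall] at hcb
      obtain ⟨f, hf, z, hz, hvan, hfz⟩ := hcb
      have hsub : Z.erase z ⊂ Z := Finset.erase_ssubset hz
      have hns' : ¬ Function.Surjective
          (fun f : MvPolynomial.homogeneousSubmodule (Fin (n + 1)) F d =>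
            fun w : {x // x ∈ Z.erase z} =>
              MvPolynomial.eval (w : Fin (n + 1) → F) (f : MvPolynomial (Fin (n + 1)) F)) := by
        intro hs
        apply hns
        intro t
        obtain ⟨g, hg⟩ := hs (fun w => t ⟨w.1, Finset.mem_of_mem_erase w.2⟩)
        set c : F := (t ⟨z, hz⟩ - MvPolynomial.eval z (g : MvPolynomial (Fin (n + 1)) F)) /
          MvPolynomial.eval z f with hc
        have hfmem : f ∈ MvPolynomial.homogeneousSubmodule (Fin (n + 1)) F d :=
          (MvPolynomial.mem_homogeneousSubmodule d f).mpr hf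
        refine ⟨g + c • ⟨f, hfmem⟩, funext fun w => ?_⟩
        by_cases hw : (w : Fin (n + 1) → F) = z
        · have hwe : (w : {x // x ∈ Z}) = ⟨z, hz⟩ := Subtype.ext hw
          simp only [Submodule.coe_add, map_add, SetLike.val_smul,
            MvPolynomial.smul_eq_C_mul, map_mul, MvPolynomial.eval_C, hw, hwe, hc]
          field_simp
          ring
        · have hwz : (w : Fin (n + 1) → F) ∈ Z.erase z := Finset.mem_erase.mpr ⟨hw, w.2⟩
          have hgw := congrFun hg ⟨w.1, hwz⟩
          simp only [Submodule.coe_add, map_add, SetLike.val_smul,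
            MvPolynomial.smul_eq_C_mul, map_mul, MvPolynomial.eval_C,
            hvan w.1 w.2 hw, mul_zero, add_zero]
          simpa using hgw
      obtain ⟨Z', hZ'sub, hZ'ne, hZ'cb⟩ := ih (Z.erase z) hsub hns'
      exact ⟨Z', hZ'sub.trans (Finset.erase_subset z Z), hZ'ne, hZ'cb⟩

/-- over an algebraically closed field, if the restriction map
`H^0(ℙ^n, O(d)) → H^0(Z, O(d))` (evaluation of degree-`d` forms at the points of `Z`)
is not surjective, then `Z` contains a nonempty subset `Z'` that is Cayley-Bacharach
for `O(d)`. -/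
theorem stmt_3 {F : Type*} [Field F] [IsAlgClosed F] (n d : ℕ)
    (Z : Finset (Fin (n + 1) → F))
    (hZ0 : ∀ z ∈ Z, z ≠ 0)
    (hZd : ∀ z ∈ Z, ∀ w ∈ Z, z ≠ w → ∀ c : F, c • z ≠ w)
    (hns : ¬ Function.Surjective
      (fun f : MvPolynomial.homogeneousSubmodule (Fin (n + 1)) F d =>
        fun z : {x // x ∈ Z} =>
          MvPolynomial.eval (z : Fin (n + 1) → F) (f : MvPolynomial (Fin (n + 1)) F))) :
    ∃ Z' : Finset (Fin (n + 1) → F), Z' ⊆ Z ∧ Z'.Nonempty ∧ IsCB F n d Z' := by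
  exact aux_cb F n d Z hns
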